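/- arXiv:2402.09823 — 2 statements merged into one kernel-verified Lean document; each statement's English description precedes it below -/
import Mathlib

section
/- Let τ' be a complex number with positive imaginary part, Λ' = {m + n·τ' : m, n ∈ ℤ} the associated lattice, and fix a meromorphic function Z on ℂ such that δ_{λ'}(Z)(z) = conj(λ') for every λ' ∈ Λ' and every z off the poles of Z. Suppose g₁₁, g₂₂, g₂₁, f₁₁, f₁₂, f₂₂ are meromorphic functions on ℂ satisfying, for every λ' ∈ Λ' and all z off their poles: δ_{λ'}(g₁₁) = δ_{λ'}(g₂₂) = δ_{λ'}(f₁₂) = 0; δ_{λ'}(g₂₁)(z) = conj(λ')·(g₂₂ − g₁₁)(z); δ_{λ'}(f_{ii})(z) = (−1)^{i+1}·conj(λ')·f₁₂(z) − conj(λ')·g_{ii}(z) for i = 1, 2. Then g₁₁, g₂₂ and f₁₂ are Λ'-elliptic, and there exist Λ'-elliptic meromorphic functions e₂₁, e₁₁, e₂₂ such that g₂₁ = (g₂₂ − g₁₁)·Z + e₂₁ and f_{ii} = ((−1)^{i+1}·f₁₂ − g_{ii})·Z + e_{ii} for i = 1, 2. -/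
open Complex ComplexConjugate

/-- A meromorphic function on `ℂ`: a function together with a closed discrete
pole set, holomorphic off the poles and meromorphic at each pole. -/
structure MeroOn where
  toFun : ℂ → ℂ
  poles : Set ℂ
  poles_closed : IsClosed poles
  poles_discrete : DiscreteTopology poles
  diffOn : DifferentiableOn ℂ toFun polesᶜ
  merom : ∀ p ∈ poles, MeromorphicAt toFun p

/-- `h` is `Λ`-elliptic: all the differences `δ_{λ'}(h)` vanish (off poles). -/
def IsElliptic (Λ : Set ℂ) (h : MeroOn) : Prop :=
  ∀ l ∈ Λ, ∀ z : ℂ, z ∉ h.poles → z + l ∉ h.poles → h.toFun (z + l) = h.toFun z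

section Helpers

lemma MeroOn.meroAt (h : MeroOn) (p : ℂ) : MeromorphicAt h.toFun p := by
  by_cases hp : p ∈ h.poles
  · exact h.merom p hp
  · exact (h.diffOn.analyticAt (h.poles_closed.isOpen_compl.mem_nhds hp)).meromorphicAt

lemma nhdsWithin_bot_of_closed {A : Set ℂ} (hA : IsClosed A) {x : ℂ} (hx : x ∉ A) :
    nhdsWithin x A = ⊥ :=
  notMem_closure_iff_nhdsWithin_eq_bot.mp (by rw [hA.closure_eq]; exact hx)

lemma nhdsWithin_diff_bot {A : Set ℂ} (hA : IsClosed A) (dA : DiscreteTopology A) (x : ℂ) :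
    nhdsWithin x (A \ {x}) = ⊥ := by
  by_cases hx : x ∈ A
  · rw [Set.diff_eq, Set.inter_comm, nhdsWithin_inter']
    exact (discreteTopology_subtype_iff.mp dA) x hx
  · exact le_bot_iff.mp <| (nhdsWithin_mono x Set.diff_subset).trans_eq
      (nhdsWithin_bot_of_closed hA hx)

lemma discrete_union2 {A B : Set ℂ} (hA : IsClosed A) (hB : IsClosed B)
    (dA : DiscreteTopology A) (dB : DiscreteTopology B) :
    DiscreteTopology ↥(A ∪ B) := by
  rw [discreteTopology_subtype_iff]
  intro x _
  rw [← nhdsWithin_inter', Set.inter_comm, ← Set.diff_eq, Set.union_diff_distrib,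
    nhdsWithin_union, nhdsWithin_diff_bot hA dA, nhdsWithin_diff_bot hB dB, sup_bot_eq]

lemma discrete_union4 {A B C D : Set ℂ} (hA : IsClosed A) (hB : IsClosed B)
    (hC : IsClosed C) (hD : IsClosed D)
    (dA : DiscreteTopology A) (dB : DiscreteTopology B)
    (dC : DiscreteTopology C) (dD : DiscreteTopology D) :
    DiscreteTopology ↥(A ∪ B ∪ C ∪ D) :=
  discrete_union2 ((hA.union hB).union hC) hD
    (discrete_union2 (hA.union hB) hC (discrete_union2 hA hB dA dB) dC) dD

/-- `a - (s*b - c) * Z`, with poles the union of the four pole sets. -/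
def MeroOn.combo (a b c Z : MeroOn) (s : ℂ) : MeroOn where
  toFun z := a.toFun z - (s * b.toFun z - c.toFun z) * Z.toFun z
  poles := a.poles ∪ b.poles ∪ c.poles ∪ Z.poles
  poles_closed := ((a.poles_closed.union b.poles_closed).union c.poles_closed).union
    Z.poles_closed
  poles_discrete := discrete_union4 a.poles_closed b.poles_closed c.poles_closed
    Z.poles_closed a.poles_discrete b.poles_discrete c.poles_discrete Z.poles_discrete
  diffOn := by
    have sub1 : (a.poles ∪ b.poles ∪ c.poles ∪ Z.poles)ᶜ ⊆ a.polesᶜ := by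
      intro x hx; simp only [Set.mem_compl_iff, Set.mem_union, not_or] at hx ⊢; tauto
    have sub2 : (a.poles ∪ b.poles ∪ c.poles ∪ Z.poles)ᶜ ⊆ b.polesᶜ := by
      intro x hx; simp only [Set.mem_compl_iff, Set.mem_union, not_or] at hx ⊢; tauto
    have sub3 : (a.poles ∪ b.poles ∪ c.poles ∪ Z.poles)ᶜ ⊆ c.polesᶜ := by
      intro x hx; simp only [Set.mem_compl_iff, Set.mem_union, not_or] at hx ⊢; tauto
    have sub4 : (a.poles ∪ b.poles ∪ c.poles ∪ Z.poles)ᶜ ⊆ Z.polesᶜ := by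
      intro x hx; simp only [Set.mem_compl_iff, Set.mem_union, not_or] at hx ⊢; tauto
    exact (a.diffOn.mono sub1).sub
      ((((b.diffOn.mono sub2).const_mul s).sub (c.diffOn.mono sub3)).mul
        (Z.diffOn.mono sub4))
  merom p _ := (a.meroAt p).sub
    ((((MeromorphicAt.const s p).mul (b.meroAt p)).sub (c.meroAt p)).mul (Z.meroAt p))

lemma combo_poles (a b c Z : MeroOn) (s : ℂ) :
    (a.combo b c Z s).poles = a.poles ∪ b.poles ∪ c.poles ∪ Z.poles := rfl

lemma combo_toFun (a b c Z : MeroOn) (s : ℂ) (z : ℂ) :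
    (a.combo b c Z s).toFun z = a.toFun z - (s * b.toFun z - c.toFun z) * Z.toFun z := rfl

end Helpers

/-- The "form II" case (`g₁₂ = 0`) of the classification of solutions of the
invariance equations for meromorphic affine connections on primary Kodaira
surfaces. -/
theorem stmt_4 (τ' : ℂ) (hτ' : 0 < τ'.im)
    (Λ : Set ℂ) (hΛ : Λ = {z : ℂ | ∃ m n : ℤ, z = (m : ℂ) + (n : ℂ) * τ'})
    (Z g₁₁ g₂₂ g₂₁ f₁₁ f₁₂ f₂₂ : MeroOn)
    (hZ : ∀ l ∈ Λ, ∀ z : ℂ, z ∉ Z.poles → z + l ∉ Z.poles →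
      Z.toFun (z + l) - Z.toFun z = conj l)
    (h1 : ∀ l ∈ Λ, ∀ z : ℂ, z ∉ g₁₁.poles → z + l ∉ g₁₁.poles →
      g₁₁.toFun (z + l) - g₁₁.toFun z = 0)
    (h2 : ∀ l ∈ Λ, ∀ z : ℂ, z ∉ g₂₂.poles → z + l ∉ g₂₂.poles →
      g₂₂.toFun (z + l) - g₂₂.toFun z = 0)
    (h3 : ∀ l ∈ Λ, ∀ z : ℂ, z ∉ f₁₂.poles → z + l ∉ f₁₂.poles →
      f₁₂.toFun (z + l) - f₁₂.toFun z = 0)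
    (h4 : ∀ l ∈ Λ, ∀ z : ℂ, z ∉ g₂₁.poles → z + l ∉ g₂₁.poles →
      z ∉ g₁₁.poles → z ∉ g₂₂.poles →
      g₂₁.toFun (z + l) - g₂₁.toFun z = conj l * (g₂₂.toFun z - g₁₁.toFun z))
    (h5 : ∀ l ∈ Λ, ∀ z : ℂ, z ∉ f₁₁.poles → z + l ∉ f₁₁.poles →
      z ∉ f₁₂.poles → z ∉ g₁₁.poles →
      f₁₁.toFun (z + l) - f₁₁.toFun z = conj l * f₁₂.toFun z - conj l * g₁₁.toFun z)
    (h6 : ∀ l ∈ Λ, ∀ z : ℂ, z ∉ f₂₂.poles → z + l ∉ f₂₂.poles →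
      z ∉ f₁₂.poles → z ∉ g₂₂.poles →
      f₂₂.toFun (z + l) - f₂₂.toFun z = -conj l * f₁₂.toFun z - conj l * g₂₂.toFun z) :
    IsElliptic Λ g₁₁ ∧ IsElliptic Λ g₂₂ ∧ IsElliptic Λ f₁₂ ∧
    ∃ e₂₁ e₁₁ e₂₂ : MeroOn,
      IsElliptic Λ e₂₁ ∧ IsElliptic Λ e₁₁ ∧ IsElliptic Λ e₂₂ ∧
      (∀ z : ℂ, z ∉ g₂₁.poles → z ∉ g₁₁.poles → z ∉ g₂₂.poles → z ∉ Z.poles →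
        z ∉ e₂₁.poles →
        g₂₁.toFun z = (g₂₂.toFun z - g₁₁.toFun z) * Z.toFun z + e₂₁.toFun z) ∧
      (∀ z : ℂ, z ∉ f₁₁.poles → z ∉ f₁₂.poles → z ∉ g₁₁.poles → z ∉ Z.poles →
        z ∉ e₁₁.poles →
        f₁₁.toFun z = (f₁₂.toFun z - g₁₁.toFun z) * Z.toFun z + e₁₁.toFun z) ∧
      (∀ z : ℂ, z ∉ f₂₂.poles → z ∉ f₁₂.poles → z ∉ g₂₂.poles → z ∉ Z.poles →
        z ∉ e₂₂.poles →
        f₂₂.toFun z = (-f₁₂.toFun z - g₂₂.toFun z) * Z.toFun z + e₂₂.toFun z) := by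
  refine ⟨fun l hl z hz hzl => sub_eq_zero.mp (h1 l hl z hz hzl),
    fun l hl z hz hzl => sub_eq_zero.mp (h2 l hl z hz hzl),
    fun l hl z hz hzl => sub_eq_zero.mp (h3 l hl z hz hzl),
    g₂₁.combo g₂₂ g₁₁ Z 1, f₁₁.combo f₁₂ g₁₁ Z 1, f₂₂.combo f₁₂ g₂₂ Z (-1),
    ?_, ?_, ?_, ?_, ?_, ?_⟩
  · intro l hl z hz hzl
    rw [combo_poles] at hz hzl
    simp only [Set.mem_union, not_or] at hz hzl
    obtain ⟨⟨⟨ha, hb⟩, hc⟩, hd⟩ := hz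
    obtain ⟨⟨⟨ha', hb'⟩, hc'⟩, hd'⟩ := hzl
    rw [combo_toFun, combo_toFun,
      sub_eq_zero.mp (h2 l hl z hb hb'), sub_eq_zero.mp (h1 l hl z hc hc'),
      eq_add_of_sub_eq (hZ l hl z hd hd')]
    linear_combination h4 l hl z ha ha' hc hb
  · intro l hl z hz hzl
    rw [combo_poles] at hz hzl
    simp only [Set.mem_union, not_or] at hz hzl
    obtain ⟨⟨⟨ha, hb⟩, hc⟩, hd⟩ := hz
    obtain ⟨⟨⟨ha', hb'⟩, hc'⟩, hd'⟩ := hzl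
    rw [combo_toFun, combo_toFun,
      sub_eq_zero.mp (h3 l hl z hb hb'), sub_eq_zero.mp (h1 l hl z hc hc'),
      eq_add_of_sub_eq (hZ l hl z hd hd')]
    linear_combination h5 l hl z ha ha' hb hc
  · intro l hl z hz hzl
    rw [combo_poles] at hz hzl
    simp only [Set.mem_union, not_or] at hz hzl
    obtain ⟨⟨⟨ha, hb⟩, hc⟩, hd⟩ := hz
    obtain ⟨⟨⟨ha', hb'⟩, hc'⟩, hd'⟩ := hzl
    rw [combo_toFun, combo_toFun,
      sub_eq_zero.mp (h3 l hl z hb hb'), sub_eq_zero.mp (h2 l hl z hc hc'),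
      eq_add_of_sub_eq (hZ l hl z hd hd')]
    linear_combination h6 l hl z ha ha' hb hc
  · intro z _ _ _ _ _
    rw [combo_toFun]; ring
  · intro z _ _ _ _ _
    rw [combo_toFun]; ring
  · intro z _ _ _ _ _
    rw [combo_toFun]; ring
end

section
/- Let τ' be a complex number with positive imaginary part and Λ' = {m + n·τ' : m, n ∈ ℤ} the associated lattice. Entire functions f₁₁, f₁₂, f₂₁, f₂₂, g₁₁, g₁₂, g₂₁, g₂₂ : ℂ → ℂ satisfy the primary-Kodaira invariance system for Λ' (at every point of ℂ) if and only if there exist constants c₁₁, c₂₂, c₂₁ ∈ ℂ such that f₁₁ ≡ c₁₁, f₂₂ ≡ c₂₂, f₂₁ ≡ c₂₁, g₂₁ ≡ c₂₂ − c₁₁, and f₁₂ ≡ 0, g₁₁ ≡ 0, g₂₂ ≡ 0, g₁₂ ≡ 0. -/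
open Complex ComplexConjugate Set Bornology

lemma deriv_entire {f : ℂ → ℂ} (hf : Differentiable ℂ f) : Differentiable ℂ (deriv f) :=
  fun z => ((AnalyticOnNhd.deriv (fun w _ => hf.analyticAt w : AnalyticOnNhd ℂ f Set.univ))
    z trivial).differentiableAt

/-- Liouville for doubly periodic entire functions. -/
lemma doubly_periodic_const {τ : ℂ} (hτ : 0 < τ.im) {f : ℂ → ℂ} (hf : Differentiable ℂ f)
    (h1 : ∀ z, f (z + 1) = f z) (h2 : ∀ z, f (z + τ) = f z) : ∀ z, f z = f 0 := by
  have p1 : Function.Periodic f 1 := h1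
  have p2 : Function.Periodic f τ := h2
  have hper : ∀ (m n : ℤ) (z : ℂ), f (z + m + n * τ) = f z := by
    intro m n z
    have := (p2.int_mul n) (z + m)
    have h1' := (p1.int_mul m) z
    simp only [mul_one] at h1'
    rw [this, h1']
  -- boundedness
  have hcomp : IsCompact ((fun p : ℝ × ℝ => f ((p.1 : ℂ) + (p.2 : ℂ) * τ)) ''
      (Set.Icc 0 1 ×ˢ Set.Icc 0 1)) := by
    apply IsCompact.image
    · exact (isCompact_Icc.prod isCompact_Icc)
    · exact hf.continuous.comp (by continuity)
  obtain ⟨C, hC⟩ := hcomp.exists_bound_of_continuousOn continuousOn_id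
  have hbd : ∀ z : ℂ, ‖f z‖ ≤ C := by
    intro z
    set y : ℝ := z.im / τ.im with hy
    set x : ℝ := z.re - y * τ.re with hx
    have hz : z = (x : ℂ) + (y : ℂ) * τ := by
      apply Complex.ext <;> simp [hx, hy, div_mul_cancel₀, ne_of_gt hτ]
    have key : f z = f (((Int.fract x : ℝ) : ℂ) + ((Int.fract y : ℝ) : ℂ) * τ) := by
      have hzz : z = (((Int.fract x : ℝ) : ℂ) + ((Int.fract y : ℝ) : ℂ) * τ)
          + (⌊x⌋ : ℤ) + (⌊y⌋ : ℤ) * τ := by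
        rw [hz]
        have hfx : (x : ℂ) = ((Int.fract x : ℝ) : ℂ) + ((⌊x⌋ : ℤ) : ℂ) := by
          rw [← Complex.ofReal_intCast, ← Complex.ofReal_add, Int.fract_add_floor]
        have hfy : (y : ℂ) = ((Int.fract y : ℝ) : ℂ) + ((⌊y⌋ : ℤ) : ℂ) := by
          rw [← Complex.ofReal_intCast, ← Complex.ofReal_add, Int.fract_add_floor]
        rw [hfx, hfy]; ring
      rw [hzz, hper]
    rw [key]
    have hmem : ((Int.fract x, Int.fract y) : ℝ × ℝ) ∈ Set.Icc (0:ℝ) 1 ×ˢ Set.Icc (0:ℝ) 1 := by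
      constructor <;> exact ⟨(Int.fract_nonneg _), le_of_lt (Int.fract_lt_one _)⟩
    exact hC _ ⟨(Int.fract x, Int.fract y), hmem, rfl⟩
  have hbdr : IsBounded (range f) := by
    rw [isBounded_iff_forall_norm_le]
    exact ⟨C, by rintro _ ⟨z, rfl⟩; exact hbd z⟩
  exact fun z => hf.apply_eq_apply_of_bounded hbdr z 0

/-- If an entire function has constant increments `a` and `conj τ * a` under the two
lattice generators, then `a = 0` and the function is constant. -/
lemma affine_periods {τ : ℂ} (hτ : 0 < τ.im) {f : ℂ → ℂ} (hf : Differentiable ℂ f) {a : ℂ}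
    (h1 : ∀ z, f (z + 1) - f z = a) (h2 : ∀ z, f (z + τ) - f z = conj τ * a) :
    a = 0 ∧ ∀ z, f z = f 0 := by
  have hd1 : ∀ z, deriv f (z + 1) = deriv f z := by
    intro z
    have : (fun w => f (w + 1)) = fun w => f w + a := by
      funext w; have := h1 w; linear_combination this
    have hc := deriv_comp_add_const f 1 (x := z)
    rw [this] at hc
    rw [← hc, deriv_add_const]
  have hd2 : ∀ z, deriv f (z + τ) = deriv f z := by
    intro z
    have : (fun w => f (w + τ)) = fun w => f w + conj τ * a := by
      funext w; have := h2 w; linear_combination this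
    have hc := deriv_comp_add_const f τ (x := z)
    rw [this] at hc
    rw [← hc, deriv_add_const]
  have hdc : ∀ z, deriv f z = deriv f 0 :=
    doubly_periodic_const hτ (deriv_entire hf) hd1 hd2
  set c := deriv f 0 with hc
  -- f z = c z + f 0
  have hlin : ∀ z, f z = c * z + f 0 := by
    have hg : Differentiable ℂ (fun w => f w - c * w) :=
      hf.sub (differentiable_id.const_mul c)
    have hg' : ∀ w, deriv (fun w => f w - c * w) w = 0 := by
      intro w
      have h : HasDerivAt (fun w => f w - c * w) (deriv f w - c * 1) w :=
        (hf w).hasDerivAt.sub ((hasDerivAt_id w).const_mul c)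
      rw [h.deriv, hdc w]; ring
    intro z
    have h0 := is_const_of_deriv_eq_zero hg hg' z 0
    simp only [mul_zero, sub_zero] at h0
    linear_combination h0
  have ha1 : a = c := by
    have h := h1 0
    rw [zero_add, hlin 1, hlin 0] at h
    simpa using h.symm
  have ha2 : conj τ * a = c * τ := by
    have h := h2 0
    rw [zero_add, hlin τ, hlin 0] at h
    simp only [mul_zero, zero_add, add_sub_cancel_right] at h
    exact h.symm
  have ha : a = 0 := by
    rw [← ha1] at ha2
    have key : a * (conj τ - τ) = 0 := by linear_combination ha2
    rcases mul_eq_zero.1 key with h | h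
    · exact h
    · exfalso
      have h2' := congrArg Complex.im h
      simp only [Complex.sub_im, Complex.conj_im, Complex.zero_im] at h2'
      linarith
  refine ⟨ha, fun z => ?_⟩
  rw [hlin z, hlin 0, ← ha1, ha]; ring

/-- Vitter's classification: entire functions satisfy the primary-Kodaira
invariance system for the lattice `Λ' = ℤ + ℤτ'` if and only if they come from
constant flat data with `g₂₁ = f₂₂ − f₁₁` and
`f₁₂ = g₁₁ = g₂₂ = g₁₂ = 0`. -/
theorem stmt_5 (τ' : ℂ) (hτ' : 0 < τ'.im)
    (Λ : Set ℂ) (hΛ : Λ = {z : ℂ | ∃ m n : ℤ, z = (m : ℂ) + (n : ℂ) * τ'})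
    (f₁₁ f₁₂ f₂₁ f₂₂ g₁₁ g₁₂ g₂₁ g₂₂ : ℂ → ℂ)
    (hf₁₁ : Differentiable ℂ f₁₁) (hf₁₂ : Differentiable ℂ f₁₂)
    (hf₂₁ : Differentiable ℂ f₂₁) (hf₂₂ : Differentiable ℂ f₂₂)
    (hg₁₁ : Differentiable ℂ g₁₁) (hg₁₂ : Differentiable ℂ g₁₂)
    (hg₂₁ : Differentiable ℂ g₂₁) (hg₂₂ : Differentiable ℂ g₂₂) :
    (∀ l ∈ Λ, ∀ z : ℂ,
      (g₁₂ (z + l) - g₁₂ z = 0) ∧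
      (g₁₁ (z + l) - g₁₁ z = conj l * g₁₂ z) ∧
      (g₂₂ (z + l) - g₂₂ z = -conj l * g₁₂ z) ∧
      (g₂₁ (z + l) - g₂₁ z =
        conj l * (g₂₂ z - g₁₁ z) - (conj l) ^ 2 * g₁₂ z) ∧
      (f₁₂ (z + l) - f₁₂ z = -conj l * g₁₂ z) ∧
      (f₁₁ (z + l) - f₁₁ z =
        conj l * f₁₂ z - conj l * g₁₁ z - (conj l) ^ 2 * g₁₂ z) ∧
      (f₂₂ (z + l) - f₂₂ z =
        -conj l * f₁₂ z - conj l * g₂₂ z + (conj l) ^ 2 * g₁₂ z) ∧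
      (f₂₁ (z + l) - f₂₁ z =
        conj l * (f₂₂ z - f₁₁ z - g₂₁ z)
          + (conj l) ^ 2 * (g₂₂ z - g₁₁ z - f₁₂ z) + (conj l) ^ 3 * g₁₂ z))
    ↔ ∃ c₁₁ c₂₂ c₂₁ : ℂ,
        (∀ z : ℂ, f₁₁ z = c₁₁) ∧ (∀ z : ℂ, f₂₂ z = c₂₂) ∧
        (∀ z : ℂ, f₂₁ z = c₂₁) ∧ (∀ z : ℂ, g₂₁ z = c₂₂ - c₁₁) ∧
        (∀ z : ℂ, f₁₂ z = 0) ∧ (∀ z : ℂ, g₁₁ z = 0) ∧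
        (∀ z : ℂ, g₂₂ z = 0) ∧ (∀ z : ℂ, g₁₂ z = 0) := by
  constructor
  · intro H
    have h1mem : (1 : ℂ) ∈ Λ := by rw [hΛ]; exact ⟨1, 0, by simp⟩
    have hτmem : τ' ∈ Λ := by rw [hΛ]; exact ⟨0, 1, by simp⟩
    have H1 := H 1 h1mem
    have Hτ := H τ' hτmem
    simp only [map_one] at H1
    -- g₁₂ is doubly periodic, hence constant
    have hg12 : ∀ z, g₁₂ z = g₁₂ 0 :=
      doubly_periodic_const hτ' hg₁₂ (fun z => sub_eq_zero.1 (H1 z).1)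
        (fun z => sub_eq_zero.1 (Hτ z).1)
    -- g₁₁ : increments conj l * g₁₂ 0 ⇒ g₁₂ 0 = 0 and g₁₁ constant
    obtain ⟨hc0, hg11⟩ := affine_periods hτ' hg₁₁ (a := g₁₂ 0)
      (fun z => by have h := (H1 z).2.1; rw [hg12 z] at h; linear_combination h)
      (fun z => by have h := (Hτ z).2.1; rw [hg12 z] at h; linear_combination h)
    have hg12z : ∀ z, g₁₂ z = 0 := fun z => (hg12 z).trans hc0
    -- g₂₂ : now doubly periodic
    have hg22 : ∀ z, g₂₂ z = g₂₂ 0 := by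
      apply doubly_periodic_const hτ' hg₂₂
      · intro z
        have h := (H1 z).2.2.1
        rw [hg12z z, mul_zero] at h
        exact sub_eq_zero.1 h
      · intro z
        have h := (Hτ z).2.2.1
        rw [hg12z z, mul_zero] at h
        exact sub_eq_zero.1 h
    -- f₁₂ : doubly periodic
    have hf12 : ∀ z, f₁₂ z = f₁₂ 0 := by
      apply doubly_periodic_const hτ' hf₁₂
      · intro z
        have h := (H1 z).2.2.2.2.1
        rw [hg12z z, mul_zero] at h
        exact sub_eq_zero.1 h
      · intro z
        have h := (Hτ z).2.2.2.2.1
        rw [hg12z z, mul_zero] at h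
        exact sub_eq_zero.1 h
    -- g₂₁
    obtain ⟨hA21, hg21⟩ := affine_periods hτ' hg₂₁ (a := g₂₂ 0 - g₁₁ 0)
      (fun z => by
        have h := (H1 z).2.2.2.1
        rw [hg22 z, hg11 z, hg12z z] at h; linear_combination h)
      (fun z => by
        have h := (Hτ z).2.2.2.1
        rw [hg22 z, hg11 z, hg12z z] at h; linear_combination h)
    -- f₁₁
    obtain ⟨hA11, hf11⟩ := affine_periods hτ' hf₁₁ (a := f₁₂ 0 - g₁₁ 0)
      (fun z => by
        have h := (H1 z).2.2.2.2.2.1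
        rw [hf12 z, hg11 z, hg12z z] at h; linear_combination h)
      (fun z => by
        have h := (Hτ z).2.2.2.2.2.1
        rw [hf12 z, hg11 z, hg12z z] at h; linear_combination h)
    -- f₂₂
    obtain ⟨hA22, hf22⟩ := affine_periods hτ' hf₂₂ (a := -f₁₂ 0 - g₂₂ 0)
      (fun z => by
        have h := (H1 z).2.2.2.2.2.2.1
        rw [hf12 z, hg22 z, hg12z z] at h; linear_combination h)
      (fun z => by
        have h := (Hτ z).2.2.2.2.2.2.1
        rw [hf12 z, hg22 z, hg12z z] at h; linear_combination h)
    -- solve linear relations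
    have he : f₁₂ 0 = 0 := by
      have h2 : (2 : ℂ) * f₁₂ 0 = 0 := by linear_combination hA11 - hA22 - hA21
      linear_combination h2 / 2
    have hg11z0 : g₁₁ 0 = 0 := by linear_combination he - hA11
    have hg22z0 : g₂₂ 0 = 0 := by linear_combination hg11z0 + hA21
    have hB : g₂₂ 0 - g₁₁ 0 - f₁₂ 0 = 0 := by
      rw [he, hg11z0, hg22z0]; ring
    -- f₂₁
    obtain ⟨hA21f, hf21⟩ := affine_periods hτ' hf₂₁ (a := f₂₂ 0 - f₁₁ 0 - g₂₁ 0)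
      (fun z => by
        have h := (H1 z).2.2.2.2.2.2.2
        rw [hf22 z, hf11 z, hg21 z, hg22 z, hg11 z, hf12 z, hg12z z] at h
        linear_combination h + hB)
      (fun z => by
        have h := (Hτ z).2.2.2.2.2.2.2
        rw [hf22 z, hf11 z, hg21 z, hg22 z, hg11 z, hf12 z, hg12z z] at h
        linear_combination h + (conj τ') ^ 2 * hB)
    refine ⟨f₁₁ 0, f₂₂ 0, f₂₁ 0, hf11, hf22, hf21,
      fun z => by rw [hg21 z]; linear_combination -hA21f,
      fun z => (hf12 z).trans he,
      fun z => (hg11 z).trans hg11z0,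
      fun z => (hg22 z).trans hg22z0, hg12z⟩
  · rintro ⟨c₁₁, c₂₂, c₂₁, e₁, e₂, e₃, e₄, e₅, e₆, e₇, e₈⟩ l hl z
    simp only [e₁, e₂, e₃, e₄, e₅, e₆, e₇, e₈]
    refine ⟨by ring, by ring, by ring, by ring, by ring, by ring, by ring, by ring⟩
end
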